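/- Let E and F be quantum spaces and f, g bounded functionals on E and F respectively. Then the bifunctional f × g : E × F → ℂ, (x,y) ↦ f(x)g(y), is strongly completely bounded with ‖f × g‖_scb = ‖f‖·‖g‖. -/

import Mathlib

set_option synthInstance.maxHeartbeats 1000000
set_option maxHeartbeats 1000000

noncomputable section

open ContinuousLinearMap TensorProduct

variable (L : Type*) [NormedAddCommGroup L] [InnerProductSpace ℂ L] [CompleteSpace L]

/-- The space `K = K(L)` of compact operators on `L`, as a `ℂ`-submodule of `B(L)`. -/
def cpt : Submodule ℂ (L →L[ℂ] L) := compactOperator (RingHom.id ℂ) L L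

variable {L}

/-- Left multiplication of a compact operator by a bounded operator. -/
def lK (g : L →L[ℂ] L) : cpt L →ₗ[ℂ] cpt L where
  toFun b := ⟨g ∘L (b : L →L[ℂ] L), by
    exact b.2.clm_comp g⟩
  map_add' b c := by ext : 1; simp [ContinuousLinearMap.comp_add]
  map_smul' m b := by ext : 1; simp [ContinuousLinearMap.comp_smul]

/-- Right multiplication of a compact operator by a bounded operator. -/
def rK (g : L →L[ℂ] L) : cpt L →ₗ[ℂ] cpt L where
  toFun b := ⟨(b : L →L[ℂ] L) ∘L g, by
    exact b.2.comp_clm g⟩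
  map_add' b c := by ext : 1; simp [ContinuousLinearMap.add_comp]
  map_smul' m b := by ext : 1; simp [ContinuousLinearMap.smul_comp]

/-- The amplification `KE = K(L) ⊗ E` of a linear space `E`. -/
abbrev Amp (L : Type*) [NormedAddCommGroup L] [InnerProductSpace ℂ L]
    [CompleteSpace L] (E : Type*) [AddCommGroup E] [Module ℂ E] :=
  TensorProduct ℂ (cpt L) E

variable {E : Type*} [AddCommGroup E] [Module ℂ E]

/-- The left outer multiplication `a · (b ⊗ x) = (ab) ⊗ x` on `KE`. -/
def lAct (g : L →L[ℂ] L) : Amp L E →ₗ[ℂ] Amp L E :=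
  TensorProduct.map (lK g) LinearMap.id

/-- The right outer multiplication `(b ⊗ x) · a = (ba) ⊗ x` on `KE`. -/
def rAct (g : L →L[ℂ] L) : Amp L E →ₗ[ℂ] Amp L E :=
  TensorProduct.map (rK g) LinearMap.id

/-- The amplification `f_∞ = 1_K ⊗ f : KE → K` of a functional `f : E → ℂ`,
with `K ⊗ ℂ` identified with `K ⊆ B(L)`; on elementary tensors,
`f_∞ (a ⊗ x) = f x • a`. -/
def ampFun (f : E →ₗ[ℂ] ℂ) : Amp L E →ₗ[ℂ] (L →L[ℂ] L) :=
  (cpt L).subtype ∘ₗ (TensorProduct.rid ℂ (cpt L)).toLinearMap ∘ₗ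
    TensorProduct.map LinearMap.id f

/-- The rank-one operator `ξ ∘ η : ζ ↦ ⟨ζ, η⟩ ξ`. -/
def rankOne {H : Type*} [NormedAddCommGroup H] [InnerProductSpace ℂ H]
    (ξ η : H) : H →L[ℂ] H :=
  (innerSL ℂ η).smulRight ξ

/-- The functional `a ↦ ⟪ξ, a η⟫` on compact operators. -/
def innFun (ξ η : L) : cpt L →ₗ[ℂ] ℂ where
  toFun a := inner ℂ ξ ((a : L →L[ℂ] L) η)
  map_add' a b := by simp [inner_add_right]
  map_smul' c a := by simp [inner_smul_right]

/-- The sliceMap map `a ⊗ x ↦ ⟪ξ, a η⟫ • x`. -/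
def sliceMap (ξ η : L) : Amp L E →ₗ[ℂ] E :=
  (TensorProduct.lid ℂ E).toLinearMap ∘ₗ TensorProduct.map (innFun ξ η) LinearMap.id

lemma slice_tmul (ξ η : L) (a : cpt L) (x : E) :
    sliceMap ξ η (a ⊗ₜ[ℂ] x) = (inner ℂ ξ ((a : L →L[ℂ] L) η) : ℂ) • x := by
  simp [sliceMap, innFun]

lemma ampFun_tmul (f : E →ₗ[ℂ] ℂ) (a : cpt L) (x : E) :
    ampFun f (a ⊗ₜ[ℂ] x) = f x • (a : L →L[ℂ] L) := by
  simp [ampFun]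

lemma slice_inner (f : E →ₗ[ℂ] ℂ) (ξ η : L) (u : Amp L E) :
    f (sliceMap ξ η u) = inner ℂ ξ ((ampFun f u) η) := by
  induction u using TensorProduct.induction_on with
  | zero => simp
  | tmul a x => simp [slice_tmul, ampFun_tmul, inner_smul_right, mul_comm]
  | add u v hu hv => simp [hu, hv, inner_add_right]

lemma norm_rankOne (ξ η : L) : ‖rankOne ξ η‖ = ‖η‖ * ‖ξ‖ := by
  rw [rankOne, ContinuousLinearMap.norm_smulRight_apply, innerSL_apply_norm]

lemma compress (e ξ η : L) (p : cpt L) (hp : (p : L →L[ℂ] L) = rankOne e e)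
    (u : Amp L E) :
    lAct (rankOne e ξ) (rAct (rankOne η e) u) = p ⊗ₜ[ℂ] sliceMap ξ η u := by
  induction u using TensorProduct.induction_on with
  | zero => simp
  | tmul a x =>
    have h1 : rAct (rankOne η e) (a ⊗ₜ[ℂ] x) = rK (rankOne η e) a ⊗ₜ[ℂ] x := rfl
    have h2 : lAct (rankOne e ξ) (rK (rankOne η e) a ⊗ₜ[ℂ] x)
        = lK (rankOne e ξ) (rK (rankOne η e) a) ⊗ₜ[ℂ] x := rfl
    have key : lK (rankOne e ξ) (rK (rankOne η e) a)
        = (inner ℂ ξ ((a : L →L[ℂ] L) η) : ℂ) • p := by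
      ext ζ
      simp only [lK, rK, LinearMap.coe_mk, AddHom.coe_mk, Submodule.coe_smul_of_tower,
        ContinuousLinearMap.coe_comp', Function.comp_apply, hp,
        ContinuousLinearMap.coe_smul', Pi.smul_apply]
      simp only [rankOne, ContinuousLinearMap.smulRight_apply, innerSL_apply_apply, map_smul,
        inner_smul_right, smul_smul]
      ring_nf
    rw [h1, h2, key, slice_tmul, TensorProduct.smul_tmul, ]
  | add u v hu hv => simp only [map_add, hu, hv, ← TensorProduct.tmul_add]

/-- Proposition 9: for bounded functionals `f`, `g` on quantum spaces `E`, `F`, the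
bifunctional `f × g : (x, y) ↦ f(x) g(y)` is strongly completely bounded with
`‖f × g‖_scb = ‖f‖ ‖g‖`.  The strong amplification acts on elementary tensors by
`(a ⊗ x, b ⊗ y) ↦ f(x) g(y) • (a b)`, i.e. `(u, v) ↦ f_∞(u) ∘ g_∞(v)`; the equality
of norms is expressed by saying that a constant `C ≥ 0` bounds the bifunctional
`f × g` on the underlying spaces iff it bounds its strong amplification. -/
theorem scb_norm_eq_norm_of_bifunctional
    {F : Type*} [AddCommGroup F] [Module ℂ F]
    (NE : Amp L E → ℝ) (NF : Amp L F → ℝ)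
    -- `NE` and `NF` are norms on `KE` and `KF`
    (hNE_tri : ∀ u v, NE (u + v) ≤ NE u + NE v)
    (hNE_hom : ∀ (c : ℂ) u, NE (c • u) = ‖c‖ * NE u)
    (hNE_def : ∀ u, NE u = 0 → u = 0)
    (hNF_tri : ∀ u v, NF (u + v) ≤ NF u + NF v)
    (hNF_hom : ∀ (c : ℂ) u, NF (c • u) = ‖c‖ * NF u)
    (hNF_def : ∀ u, NF u = 0 → u = 0)
    -- the first axiom of Ruan (RI) for both spaces
    (hRIE : ∀ (g : L →L[ℂ] L) (u : Amp L E),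
      NE (lAct g u) ≤ ‖g‖ * NE u ∧ NE (rAct g u) ≤ ‖g‖ * NE u)
    (hRIF : ∀ (g : L →L[ℂ] L) (v : Amp L F),
      NF (lAct g v) ≤ ‖g‖ * NF v ∧ NF (rAct g v) ≤ ‖g‖ * NF v)
    -- the second axiom of Ruan (RII) for both spaces
    (hRIIE : ∀ (u v : Amp L E) (P Q : L →L[ℂ] L),
      P ∘L P = P → adjoint P = P → Q ∘L Q = Q → adjoint Q = Q → P ∘L Q = 0 →
      lAct P u = u → rAct P u = u → lAct Q v = v → rAct Q v = v →
      NE (u + v) = max (NE u) (NE v))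
    (hRIIF : ∀ (u v : Amp L F) (P Q : L →L[ℂ] L),
      P ∘L P = P → adjoint P = P → Q ∘L Q = Q → adjoint Q = Q → P ∘L Q = 0 →
      lAct P u = u → rAct P u = u → lAct Q v = v → rAct Q v = v →
      NF (u + v) = max (NF u) (NF v))
    -- a rank-one projection `p = e ∘ e`
    (e : L) (he : ‖e‖ = 1) (p : cpt L) (hp : (p : L →L[ℂ] L) = rankOne e e)
    -- the functionals and a constant
    (f : E →ₗ[ℂ] ℂ) (g : F →ₗ[ℂ] ℂ) (C : ℝ) (hC : 0 ≤ C) :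
    (∀ (x : E) (y : F), ‖f x * g y‖ ≤ C * NE (p ⊗ₜ[ℂ] x) * NF (p ⊗ₜ[ℂ] y)) ↔
      (∀ (u : Amp L E) (v : Amp L F),
        ‖ampFun f u ∘L ampFun g v‖ ≤ C * NE u * NF v) := by
  have hNE0 : ∀ u, 0 ≤ NE u := by
    intro u
    have h0 : NE 0 = 0 := by simpa using hNE_hom 0 u
    have hneg : NE (-u) = NE u := by
      have := hNE_hom (-1) u
      rw [show ((-1 : ℂ)) • u = -u from neg_one_smul ℂ u] at this
      simpa using this
    have h3 := hNE_tri u (-u)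
    rw [show u + -u = 0 from by abel, h0, hneg] at h3
    linarith
  have hNF0 : ∀ v, 0 ≤ NF v := by
    intro v
    have h0 : NF 0 = 0 := by simpa using hNF_hom 0 v
    have hneg : NF (-v) = NF v := by
      have := hNF_hom (-1) v
      rw [show ((-1 : ℂ)) • v = -v from neg_one_smul ℂ v] at this
      simpa using this
    have h3 := hNF_tri v (-v)
    rw [show v + -v = 0 from by abel, h0, hneg] at h3
    linarith
  have hNEs : ∀ (ξ η : L) (u : Amp L E),
      NE (p ⊗ₜ[ℂ] sliceMap ξ η u) ≤ ‖ξ‖ * ‖η‖ * NE u := by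
    intro ξ η u
    rw [← compress e ξ η p hp u]
    calc NE (lAct (rankOne e ξ) (rAct (rankOne η e) u))
        ≤ ‖rankOne e ξ‖ * NE (rAct (rankOne η e) u) := (hRIE _ _).1
      _ ≤ ‖rankOne e ξ‖ * (‖rankOne η e‖ * NE u) :=
          mul_le_mul_of_nonneg_left (hRIE _ _).2 (norm_nonneg _)
      _ = ‖ξ‖ * ‖η‖ * NE u := by rw [norm_rankOne, norm_rankOne, he]; ring
  have hNFs : ∀ (ξ η : L) (v : Amp L F),
      NF (p ⊗ₜ[ℂ] sliceMap ξ η v) ≤ ‖ξ‖ * ‖η‖ * NF v := by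
    intro ξ η v
    rw [← compress e ξ η p hp v]
    calc NF (lAct (rankOne e ξ) (rAct (rankOne η e) v))
        ≤ ‖rankOne e ξ‖ * NF (rAct (rankOne η e) v) := (hRIF _ _).1
      _ ≤ ‖rankOne e ξ‖ * (‖rankOne η e‖ * NF v) :=
          mul_le_mul_of_nonneg_left (hRIF _ _).2 (norm_nonneg _)
      _ = ‖ξ‖ * ‖η‖ * NF v := by rw [norm_rankOne, norm_rankOne, he]; ring
  constructor
  · intro h u v
    have hM : 0 ≤ C * NE u * NF v := mul_nonneg (mul_nonneg hC (hNE0 u)) (hNF0 v)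
    refine ContinuousLinearMap.opNorm_le_bound _ hM fun ζ => ?_
    rw [ContinuousLinearMap.comp_apply]
    set η : L := ampFun g v ζ with hη
    set w : L := ampFun f u η with hw
    by_cases hw0 : w = 0
    · rw [hw0, norm_zero]; positivity
    have hη0 : η ≠ 0 := by
      intro h0
      apply hw0
      rw [hw, h0, map_zero]
    have e1 : f (sliceMap w η u) = (‖w‖ : ℂ) ^ 2 := by
      rw [slice_inner, ← hw, inner_self_eq_norm_sq_to_K]; norm_cast
    have e2 : g (sliceMap η ζ v) = (‖η‖ : ℂ) ^ 2 := by
      rw [slice_inner, ← hη, inner_self_eq_norm_sq_to_K]; norm_cast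
    have hbound := h (sliceMap w η u) (sliceMap η ζ v)
    rw [e1, e2] at hbound
    have hnorm : ‖(‖w‖ : ℂ) ^ 2 * (‖η‖ : ℂ) ^ 2‖ = ‖w‖ ^ 2 * ‖η‖ ^ 2 := by
      rw [norm_mul, norm_pow, norm_pow, Complex.norm_real, Complex.norm_real,
        Real.norm_eq_abs, abs_norm, Real.norm_eq_abs, abs_norm]
    rw [hnorm] at hbound
    have hE := hNEs w η u
    have hF := hNFs η ζ v
    have key : ‖w‖ ^ 2 * ‖η‖ ^ 2 ≤ C * (‖w‖ * ‖η‖ * NE u) * (‖η‖ * ‖ζ‖ * NF v) := by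
      calc ‖w‖ ^ 2 * ‖η‖ ^ 2 ≤ C * NE (p ⊗ₜ[ℂ] sliceMap w η u) * NF (p ⊗ₜ[ℂ] sliceMap η ζ v) :=
            hbound
        _ ≤ C * (‖w‖ * ‖η‖ * NE u) * (‖η‖ * ‖ζ‖ * NF v) := by
            apply mul_le_mul
            · exact mul_le_mul_of_nonneg_left hE hC
            · exact hF
            · exact hNF0 _
            · exact mul_nonneg hC
                (mul_nonneg (mul_nonneg (norm_nonneg _) (norm_nonneg _)) (hNE0 u))
    have hwpos : 0 < ‖w‖ := norm_pos_iff.mpr hw0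
    have hηpos : 0 < ‖η‖ := norm_pos_iff.mpr hη0
    have step : ‖w‖ * (‖w‖ * ‖η‖ ^ 2) ≤ C * NE u * NF v * ‖ζ‖ * (‖w‖ * ‖η‖ ^ 2) := by
      nlinarith [key]
    exact le_of_mul_le_mul_right step (mul_pos hwpos (pow_pos hηpos 2))
  · intro h x y
    have hb := h (p ⊗ₜ[ℂ] x) (p ⊗ₜ[ℂ] y)
    rw [ampFun_tmul, ampFun_tmul] at hb
    have hinner : (inner ℂ e e : ℂ) = 1 := by
      rw [inner_self_eq_norm_sq_to_K, he]; norm_num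
    have hpp : (p : L →L[ℂ] L) ∘L (p : L →L[ℂ] L) = (p : L →L[ℂ] L) := by
      ext ζ
      simp only [ContinuousLinearMap.comp_apply, hp, rankOne,
        ContinuousLinearMap.smulRight_apply, innerSL_apply_apply, inner_smul_right, hinner,
        smul_smul, mul_one]
    have hcomp : (f x • (p : L →L[ℂ] L)) ∘L (g y • (p : L →L[ℂ] L))
        = (f x * g y) • (p : L →L[ℂ] L) := by
      rw [ContinuousLinearMap.smul_comp, ContinuousLinearMap.comp_smul, hpp, smul_smul]
    rw [hcomp, norm_smul] at hb
    have hpnorm : ‖(p : L →L[ℂ] L)‖ = 1 := by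
      rw [hp, norm_rankOne, he, one_mul]
    rw [hpnorm, mul_one] at hb
    exact hb

end
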